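/- Let b > 0, let k ≥ 1 and t ≥ 1 be natural numbers, let v ≥ √k · b, and let 0 < λ < 2√2 · v²/b. Let μ be the product measure on ℝ^k each of whose k factors is the Laplace measure with scale b, and let μ^{⊗t} be the t-fold product of μ on (ℝ^k)^t. Then μ^{⊗t}({ω : ∑_{i=1}^{k} ω_{j,i} > λ for all j = 1, …, t}) ≤ exp(−t·λ²/(8v²)). -/

import Mathlib

open MeasureTheory Real Set Filter
open scoped ENNReal

/-- The Laplace measure with scale `b`. -/
noncomputable def laplaceMeasure (b : ℝ) : Measure ℝ :=
  volume.withDensity (fun x => ENNReal.ofReal ((1 / (2 * b)) * Real.exp (-|x| / b)))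

namespace LaplaceTailAux

lemma integral_exp_neg_mul_Ioi {c : ℝ} (hc : 0 < c) :
    ∫ x in Ioi (0:ℝ), Real.exp (-(c * x)) = 1 / c := by
  have hderiv : ∀ x ∈ Ici (0:ℝ),
      HasDerivAt (fun x : ℝ => -c⁻¹ * Real.exp (-(c * x))) (Real.exp (-(c * x))) x := by
    intro x _
    have h1 : HasDerivAt (fun x : ℝ => -(c * x)) (-c) x := by
      simpa using ((hasDerivAt_id x).const_mul c).fun_neg
    have h2 := (h1.exp).const_mul (-c⁻¹)
    convert h2 using 1
    · rfl
    · rfl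
    · field_simp
  have hint : IntegrableOn (fun x : ℝ => Real.exp (-(c * x))) (Ioi 0) := by
    simpa [neg_mul] using exp_neg_integrableOn_Ioi 0 hc
  have htend : Tendsto (fun x : ℝ => -c⁻¹ * Real.exp (-(c * x))) atTop (nhds 0) := by
    have h1 : Tendsto (fun x : ℝ => -(c * x)) atTop atBot :=
      tendsto_neg_atTop_atBot.comp (Tendsto.const_mul_atTop hc tendsto_id)
    have h2 : Tendsto (fun x : ℝ => Real.exp (-(c * x))) atTop (nhds 0) :=
      Real.tendsto_exp_atBot.comp h1
    simpa using h2.const_mul (-c⁻¹)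
  have h := integral_Ioi_of_hasDerivAt_of_tendsto' hderiv hint htend
  simp only [mul_zero, neg_zero, Real.exp_zero, mul_one, zero_sub, neg_neg] at h
  rw [h, one_div]

lemma integral_exp_mul_Iic {c : ℝ} (hc : 0 < c) :
    ∫ x in Iic (0:ℝ), Real.exp (c * x) = 1 / c := by
  have h := integral_comp_neg_Iic (0:ℝ) (fun y => Real.exp (-(c * y)))
  simp only [neg_zero, mul_neg, neg_neg] at h
  rw [integral_exp_neg_mul_Ioi hc] at h
  exact h

lemma key_integral {b s : ℝ} (hb : 0 < b) (hs : 0 ≤ s) (hsb : s * b < 1) :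
    ∫⁻ x : ℝ, ENNReal.ofReal ((1 / (2 * b)) * Real.exp (-|x| / b) * Real.exp (s * x)) ∂volume
      = ENNReal.ofReal (1 / (1 - s ^ 2 * b ^ 2)) := by
  have hb' : b ≠ 0 := ne_of_gt hb
  have hs1 : s < 1 / b := by rw [lt_div_iff₀ hb]; exact hsb
  have hc₁ : 0 < 1 / b - s := by linarith
  have hc₂ : 0 < 1 / b + s := by positivity
  set G : ℝ → ℝ := fun x => Real.exp (s * x - |x| / b) with hG
  have hG_Ioi : EqOn G (fun x => Real.exp (-((1 / b - s) * x))) (Ioi 0) := by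
    intro x hx
    simp only [G]
    congr 1
    rw [abs_of_pos hx]
    ring
  have hG_Iic : EqOn G (fun x => Real.exp ((1 / b + s) * x)) (Iic 0) := by
    intro x hx
    simp only [G]
    congr 1
    rw [abs_of_nonpos hx]
    ring
  have intIoi : IntegrableOn G (Ioi 0) := by
    have : IntegrableOn (fun x : ℝ => Real.exp (-((1 / b - s) * x))) (Ioi 0) := by
      have h0 := exp_neg_integrableOn_Ioi 0 hc₁
      simp only [neg_mul] at h0
      exact h0
    exact this.congr_fun hG_Ioi.symm measurableSet_Ioi
  have intIic : IntegrableOn G (Iic 0) := by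
    have h1 : IntegrableOn (fun x : ℝ => Real.exp ((1 / b + s) * x)) (Iic 0) := by
      rw [← Measure.map_neg_eq_self (volume : Measure ℝ)]
      have m : MeasurableEmbedding fun x : ℝ => -x :=
        (Homeomorph.neg ℝ).measurableEmbedding
      rw [m.integrableOn_map_iff]
      have : (fun x : ℝ => -x) ⁻¹' Iic 0 = Ici 0 := by
        ext x; simp
      rw [this]
      have h0 : IntegrableOn (fun x : ℝ => Real.exp (-((1 / b + s) * x))) (Ioi 0) := by
        have h0 := exp_neg_integrableOn_Ioi 0 hc₂
        simp only [neg_mul] at h0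
        exact h0
      refine (Iff.mpr integrableOn_Ici_iff_integrableOn_Ioi ?_)
      refine h0.congr_fun (fun x _ => ?_) measurableSet_Ioi
      simp only [Function.comp_def]
      congr 1
      ring
    exact h1.congr_fun hG_Iic.symm measurableSet_Iic
  have hGint : Integrable G := by
    have h := intIic.union intIoi
    rwa [Iic_union_Ioi, integrableOn_univ] at h
  have hsplit : ∫ x, G x = (∫ x in Iic 0, G x) + ∫ x in Ioi 0, G x := by
    rw [← setIntegral_union (Iic_disjoint_Ioi le_rfl) measurableSet_Ioi intIic intIoi,
      Iic_union_Ioi, Measure.restrict_univ]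
  have hIic : ∫ x in Iic (0:ℝ), G x = 1 / (1 / b + s) := by
    rw [setIntegral_congr_fun measurableSet_Iic hG_Iic]
    exact integral_exp_mul_Iic hc₂
  have hIoi : ∫ x in Ioi (0:ℝ), G x = 1 / (1 / b - s) := by
    rw [setIntegral_congr_fun measurableSet_Ioi hG_Ioi]
    exact integral_exp_neg_mul_Ioi hc₁
  have heq : ∀ x : ℝ, (1 / (2 * b)) * Real.exp (-|x| / b) * Real.exp (s * x)
      = (1 / (2 * b)) * G x := by
    intro x
    rw [mul_assoc, ← Real.exp_add]
    congr 2
    ring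
  simp_rw [heq]
  have hnn : 0 ≤ᵐ[volume] fun x => (1 / (2 * b)) * G x := by
    refine ae_of_all _ fun x => ?_
    have : (0:ℝ) < 1 / (2 * b) := by positivity
    exact mul_nonneg this.le (Real.exp_pos _).le
  rw [← ofReal_integral_eq_lintegral_ofReal (hGint.const_mul _) hnn]
  congr 1
  rw [integral_const_mul, hsplit, hIic, hIoi]
  have h1 : (0:ℝ) < 1 - s ^ 2 * b ^ 2 := by nlinarith [mul_nonneg hs hb.le]
  have e1 : (1:ℝ) - b * s ≠ 0 := by nlinarith [mul_nonneg hs hb.le]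
  have e2 : (1:ℝ) + b * s ≠ 0 := by nlinarith [mul_nonneg hs hb.le]
  have e3 : (1:ℝ) - b ^ 2 * s ^ 2 ≠ 0 := by nlinarith [mul_nonneg hs hb.le]
  field_simp
  ring

lemma laplace_lintegral_exp {b s : ℝ} (hb : 0 < b) (hs : 0 ≤ s) (hsb : s * b < 1) :
    ∫⁻ x, ENNReal.ofReal (Real.exp (s * x)) ∂laplaceMeasure b
      = ENNReal.ofReal (1 / (1 - s ^ 2 * b ^ 2)) := by
  have hd : Measurable fun x : ℝ => ENNReal.ofReal ((1 / (2 * b)) * Real.exp (-|x| / b)) := by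
    fun_prop
  have hg : Measurable fun x : ℝ => ENNReal.ofReal (Real.exp (s * x)) := by fun_prop
  rw [laplaceMeasure, lintegral_withDensity_eq_lintegral_mul _ hd hg]
  have hnn : ∀ x : ℝ, 0 ≤ (1 / (2 * b)) * Real.exp (-|x| / b) := fun x =>
    mul_nonneg (le_of_lt (by positivity)) (Real.exp_pos _).le
  simp_rw [Pi.mul_apply, ← ENNReal.ofReal_mul (hnn _)]
  exact key_integral hb hs hsb

lemma laplace_isProbability {b : ℝ} (hb : 0 < b) :
    IsProbabilityMeasure (laplaceMeasure b) := by
  constructor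
  have h := laplace_lintegral_exp (s := 0) hb le_rfl (by simpa using zero_lt_one)
  simpa using h

lemma one_div_le_exp {x : ℝ} (hx0 : 0 ≤ x) (hx : x ≤ 1 / 2) :
    1 / (1 - x) ≤ Real.exp (2 * x) := by
  have h1 : (0:ℝ) < 1 - x := by linarith
  have h2 : 1 + 2 * x ≤ Real.exp (2 * x) := by
    have := Real.add_one_le_exp (2 * x); linarith
  have h4 : 1 / (1 - x) ≤ 1 + 2 * x := by
    rw [div_le_iff₀ h1]; nlinarith
  linarith

lemma lintegral_pi_prod (μ : Measure ℝ) [SigmaFinite μ] {f : ℝ → ℝ≥0∞}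
    (hf : Measurable f) (n : ℕ) :
    ∫⁻ x : Fin n → ℝ, ∏ i, f (x i) ∂Measure.pi (fun _ => μ) = (∫⁻ x, f x ∂μ) ^ n := by
  induction n with
  | zero => simp
  | succ n ih =>
    have h := measurePreserving_piFinSuccAbove (fun _ : Fin (n + 1) => μ) 0
    have hcomp := h.lintegral_comp_emb
      (MeasurableEquiv.measurableEmbedding _)
      (fun z : ℝ × (Fin n → ℝ) => f z.1 * ∏ i, f (z.2 i))
    have hlhs : ∫⁻ x : Fin (n + 1) → ℝ, ∏ i, f (x i) ∂Measure.pi (fun _ => μ)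
        = ∫⁻ z : ℝ × (Fin n → ℝ), f z.1 * ∏ i, f (z.2 i)
            ∂(μ.prod (Measure.pi fun _ : Fin n => μ)) := by
      rw [← hcomp]
      refine lintegral_congr fun x => ?_
      simp [MeasurableEquiv.piFinSuccAbove, Fin.prod_univ_succ, Fin.zero_succAbove, Fin.tail]
    have hg : Measurable fun y : Fin n → ℝ => ∏ i, f (y i) :=
      Finset.measurable_prod Finset.univ fun i _ => hf.comp (measurable_pi_apply i)
    rw [hlhs, lintegral_prod_mul hf.aemeasurable hg.aemeasurable, ih, pow_succ, mul_comm]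

lemma single_bound {b : ℝ} (hb : 0 < b) {k : ℕ} (hk : 1 ≤ k) {v : ℝ}
    (hv : Real.sqrt k * b ≤ v) {lam : ℝ} (hlam₁ : 0 < lam)
    (hlam₂ : lam < 2 * Real.sqrt 2 * v ^ 2 / b) :
    Measure.pi (fun _ : Fin k => laplaceMeasure b) {x : Fin k → ℝ | lam < ∑ i, x i}
      ≤ ENNReal.ofReal (Real.exp (-lam ^ 2 / (8 * v ^ 2))) := by
  haveI := laplace_isProbability hb
  have hk0 : (0:ℝ) < k := by exact_mod_cast hk
  have hsqk : 0 < Real.sqrt k := Real.sqrt_pos.mpr hk0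
  have hv0 : 0 < v := lt_of_lt_of_le (mul_pos hsqk hb) hv
  set s : ℝ := lam / (4 * v ^ 2) with hs_def
  have hs : 0 < s := div_pos hlam₁ (by positivity)
  have hsqrt2 : Real.sqrt 2 ^ 2 = 2 := Real.sq_sqrt (by norm_num)
  have hsqrt2' : 0 < Real.sqrt 2 := Real.sqrt_pos.mpr (by norm_num)
  have hlamb : lam * b < 2 * Real.sqrt 2 * v ^ 2 := by
    rwa [lt_div_iff₀ hb] at hlam₂
  have hsb2 : s * b < Real.sqrt 2 / 2 := by
    rw [hs_def, div_mul_eq_mul_div, div_lt_div_iff₀ (by positivity) (by norm_num : (0:ℝ) < 2)]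
    nlinarith
  have hsbnn : 0 ≤ s * b := mul_nonneg hs.le hb.le
  have hsq : s ^ 2 * b ^ 2 ≤ 1 / 2 := by nlinarith
  have hsb1 : s * b < 1 := by nlinarith
  have hA : MeasurableSet {x : Fin k → ℝ | lam < ∑ i, x i} :=
    measurableSet_lt measurable_const (Finset.measurable_sum _ fun i _ => measurable_pi_apply i)
  have hmeas : Measurable fun x : ℝ => ENNReal.ofReal (Real.exp (s * x)) := by fun_prop
  have hkb : (k:ℝ) * b ^ 2 ≤ v ^ 2 := by
    have h1 : (Real.sqrt k * b) ^ 2 ≤ v ^ 2 :=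
      pow_le_pow_left₀ (mul_nonneg hsqk.le hb.le) hv 2
    rwa [mul_pow, Real.sq_sqrt hk0.le] at h1
  have hfinal : -(s * lam) + (k:ℝ) * (2 * (s ^ 2 * b ^ 2)) ≤ -lam ^ 2 / (8 * v ^ 2) := by
    have h1 : (k:ℝ) * (2 * (s ^ 2 * b ^ 2)) ≤ 2 * s ^ 2 * v ^ 2 := by nlinarith [sq_nonneg s]
    have h2 : -(s * lam) + 2 * s ^ 2 * v ^ 2 = -lam ^ 2 / (8 * v ^ 2) := by
      rw [hs_def]; field_simp; ring
    linarith
  calc Measure.pi (fun _ : Fin k => laplaceMeasure b) {x : Fin k → ℝ | lam < ∑ i, x i}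
      = ∫⁻ x, ({x : Fin k → ℝ | lam < ∑ i, x i}).indicator 1 x
          ∂Measure.pi (fun _ : Fin k => laplaceMeasure b) := (lintegral_indicator_one hA).symm
    _ ≤ ∫⁻ x, ENNReal.ofReal (Real.exp (-(s * lam)) * Real.exp (s * ∑ i, x i))
          ∂Measure.pi (fun _ : Fin k => laplaceMeasure b) := by
        refine lintegral_mono fun x => ?_
        by_cases hx : x ∈ {x : Fin k → ℝ | lam < ∑ i, x i}
        · rw [indicator_of_mem hx, ← Real.exp_add]
          refine le_trans ?_ le_rfl
          have hxl : lam < ∑ i, x i := hx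
          have : s * lam ≤ s * ∑ i, x i := mul_le_mul_of_nonneg_left hxl.le hs.le
          exact ENNReal.one_le_ofReal.mpr (Real.one_le_exp (by linarith))
        · rw [indicator_of_notMem hx]; exact bot_le
    _ = ENNReal.ofReal (Real.exp (-(s * lam))) *
          ∫⁻ x, ∏ i, ENNReal.ofReal (Real.exp (s * x i))
            ∂Measure.pi (fun _ : Fin k => laplaceMeasure b) := by
        simp_rw [ENNReal.ofReal_mul (Real.exp_pos _).le]
        rw [lintegral_const_mul _ (by fun_prop)]
        congr 1
        refine lintegral_congr fun x => ?_
        congr 1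
        rw [Finset.mul_sum, Real.exp_sum, ENNReal.ofReal_prod_of_nonneg
          (fun i _ => (Real.exp_pos _).le)]
    _ = ENNReal.ofReal (Real.exp (-(s * lam))) *
          (∫⁻ x, ENNReal.ofReal (Real.exp (s * x)) ∂laplaceMeasure b) ^ k := by
        rw [lintegral_pi_prod _ hmeas]
    _ = ENNReal.ofReal (Real.exp (-(s * lam))) *
          (ENNReal.ofReal (1 / (1 - s ^ 2 * b ^ 2))) ^ k := by
        rw [laplace_lintegral_exp hb hs.le hsb1]
    _ ≤ ENNReal.ofReal (Real.exp (-(s * lam))) *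
          (ENNReal.ofReal (Real.exp (2 * (s ^ 2 * b ^ 2)))) ^ k := by
        gcongr
        exact one_div_le_exp (by positivity) hsq
        
    _ = ENNReal.ofReal (Real.exp (-(s * lam) + (k:ℝ) * (2 * (s ^ 2 * b ^ 2)))) := by
        rw [← ENNReal.ofReal_pow (Real.exp_pos _).le, ← Real.exp_nat_mul,
          ← ENNReal.ofReal_mul (Real.exp_pos _).le, ← Real.exp_add]
    _ ≤ ENNReal.ofReal (Real.exp (-lam ^ 2 / (8 * v ^ 2))) :=
        ENNReal.ofReal_le_ofReal (Real.exp_le_exp.mpr hfinal)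

end LaplaceTailAux

theorem laplace_sum_tail_iterated_bound (b : ℝ) (hb : 0 < b) (k t : ℕ) (hk : 1 ≤ k)
    (ht : 1 ≤ t) (v : ℝ) (hv : Real.sqrt k * b ≤ v) (lam : ℝ) (hlam₁ : 0 < lam)
    (hlam₂ : lam < 2 * Real.sqrt 2 * v ^ 2 / b) :
    Measure.pi (fun _ : Fin t => Measure.pi (fun _ : Fin k => laplaceMeasure b))
        {ω : Fin t → Fin k → ℝ | ∀ j, lam < ∑ i, ω j i} ≤
      ENNReal.ofReal (Real.exp (-(t * lam ^ 2) / (8 * v ^ 2))) := by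
  haveI := LaplaceTailAux.laplace_isProbability hb
  have hset : {ω : Fin t → Fin k → ℝ | ∀ j, lam < ∑ i, ω j i}
      = Set.pi Set.univ (fun _ : Fin t => {x : Fin k → ℝ | lam < ∑ i, x i}) := by
    ext ω; simp [Set.mem_pi]
  rw [hset, Measure.pi_pi, Finset.prod_const, Finset.card_univ, Fintype.card_fin]
  calc (Measure.pi (fun _ : Fin k => laplaceMeasure b) {x : Fin k → ℝ | lam < ∑ i, x i}) ^ t
      ≤ (ENNReal.ofReal (Real.exp (-lam ^ 2 / (8 * v ^ 2)))) ^ t := by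
        gcongr
        exact LaplaceTailAux.single_bound hb hk hv hlam₁ hlam₂
    _ = ENNReal.ofReal (Real.exp (-(t * lam ^ 2) / (8 * v ^ 2))) := by
        rw [← ENNReal.ofReal_pow (Real.exp_pos _).le, ← Real.exp_nat_mul]
        congr 1
        ring
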